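/- Let p be an odd prime and let r be an integer with p dividing r + 1. Define the rational numbers cₙ = binom(1/2, n)·(r² − 1)ⁿ, where binom(1/2, n) = (Π_{i=0}^{n−1} (1/2 − i))/n!. Then the series Σₙ cₙ converges in the p-adic numbers ℚ_p (its partial sums converge p-adically), and its p-adic sum equals −r. -/

import Mathlib

/-- The generalized binomial coefficient `binom(1/2, n)` as a rational number. -/
noncomputable def halfChoose (n : ℕ) : ℚ :=
  (∏ i ∈ Finset.range n, ((1 : ℚ) / 2 - (i : ℚ))) / (n.factorial : ℚ)

lemma descPochhammer_eval_prod (n : ℕ) (q : ℚ) :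
    (descPochhammer ℚ n).eval q = ∏ i ∈ Finset.range n, (q - (i : ℚ)) := by
  induction n with
  | zero => simp
  | succ n ih =>
    rw [descPochhammer_succ_right, Polynomial.eval_mul, ih, Finset.prod_range_succ]
    simp

lemma halfChoose_eq_ringChoose (n : ℕ) :
    halfChoose n = Ring.choose ((1 : ℚ)/2) n := by
  have h := Ring.descPochhammer_eq_factorial_smul_choose ((1:ℚ)/2) n
  rw [← Polynomial.aeval_eq_smeval, Polynomial.aeval_def, Polynomial.eval₂_eq_eval_map,
    descPochhammer_map, descPochhammer_eval_prod] at h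
  have hf : ((n.factorial : ℚ)) ≠ 0 := by positivity
  rw [halfChoose, h, nsmul_eq_mul, mul_comm, mul_div_assoc, div_self hf, mul_one]

lemma halfChoose_vandermonde (n : ℕ) :
    ∑ ij ∈ Finset.HasAntidiagonal.antidiagonal n, halfChoose ij.1 * halfChoose ij.2
      = (Nat.choose 1 n : ℚ) := by
  simp_rw [halfChoose_eq_ringChoose]
  rw [← Ring.add_choose_eq n (Commute.all _ _)]
  norm_num
  rw [show ((1:ℚ)) = ((1:ℕ):ℚ) by norm_num, Ring.choose_natCast]

lemma halfChoose_succ (n : ℕ) :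
    halfChoose (n + 1) = halfChoose n * ((1:ℚ)/2 - (n:ℚ)) / ((n:ℚ) + 1) := by
  have hf : ((n.factorial : ℚ)) ≠ 0 := by positivity
  have hn : ((n:ℚ) + 1) ≠ 0 := by positivity
  rw [halfChoose, halfChoose, Finset.prod_range_succ, Nat.factorial_succ]
  push_cast
  field_simp

lemma halfChoose_catalan (n : ℕ) :
    halfChoose (n + 1) = (-1)^n * 2 * (catalan n : ℚ) / 4^(n+1) := by
  induction n with
  | zero => simp [halfChoose]; norm_num
  | succ n ih =>
    have hcb : ((n:ℚ) + 2) * (catalan (n+1) : ℚ) = 2 * (2*(n:ℚ)+1) * (catalan n : ℚ) := by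
      have h1 : ((n+1+1 : ℕ) * catalan (n+1) : ℕ) = Nat.centralBinom (n+1) :=
        succ_mul_catalan_eq_centralBinom (n+1)
      have h2 : ((n+1 : ℕ) * catalan n : ℕ) = Nat.centralBinom n :=
        succ_mul_catalan_eq_centralBinom n
      have h3 := Nat.succ_mul_centralBinom_succ n
      have hq1 : ((n:ℚ)+2) * (catalan (n+1) : ℚ) = (Nat.centralBinom (n+1) : ℚ) := by
        exact_mod_cast congrArg (Nat.cast : ℕ → ℚ) h1
      have hq2 : ((n:ℚ)+1) * (catalan n : ℚ) = (Nat.centralBinom n : ℚ) := by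
        exact_mod_cast congrArg (Nat.cast : ℕ → ℚ) h2
      have hq3 : ((n:ℚ)+1) * (Nat.centralBinom (n+1) : ℚ)
          = 2 * (2*(n:ℚ)+1) * (Nat.centralBinom n : ℚ) := by
        exact_mod_cast congrArg (Nat.cast : ℕ → ℚ) h3
      have hn1 : ((n:ℚ)+1) ≠ 0 := by positivity
      field_simp [← hq1, ← hq2] at hq3 ⊢
      nlinarith [hq3]
    have hn2 : ((n:ℚ)+2) ≠ 0 := by positivity
    have hcat : (catalan (n+1) : ℚ) = 2*(2*(n:ℚ)+1)*(catalan n : ℚ) / ((n:ℚ)+2) := by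
      rw [eq_div_iff hn2]; linear_combination hcb
    rw [halfChoose_succ (n+1), ih, hcat]
    push_cast
    field_simp
    ring

section padic
variable (p : ℕ) [Fact p.Prime]

lemma not_dvd_two (hodd : Odd p) : ¬ ((p : ℤ) ∣ 2) := by
  intro h
  have hp : p.Prime := Fact.out
  have h2 : p ∣ 2 := by exact_mod_cast h
  have := (Nat.prime_dvd_prime_iff_eq hp Nat.prime_two).mp h2
  rw [this, Nat.odd_iff] at hodd
  omega

lemma norm_two_padic (hodd : Odd p) : ‖(2 : ℚ_[p])‖ = 1 := by
  have h1 : ‖((2:ℤ) : ℚ_[p])‖ ≤ 1 := Padic.norm_int_le_one 2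
  have h2 : ¬ ‖((2:ℤ) : ℚ_[p])‖ < 1 := by
    rw [Padic.norm_intCast_lt_one_iff]
    exact not_dvd_two p hodd
  push_cast at h1 h2
  linarith [lt_or_eq_of_le h1]

lemma norm_four_padic (hodd : Odd p) : ‖(4 : ℚ_[p])‖ = 1 := by
  have : (4 : ℚ_[p]) = 2 * 2 := by norm_num
  rw [this, norm_mul, norm_two_padic p hodd, one_mul]

lemma norm_halfChoose_le (hodd : Odd p) (n : ℕ) :
    ‖((halfChoose n : ℚ) : ℚ_[p])‖ ≤ 1 := by
  cases n with
  | zero => simp [halfChoose]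
  | succ n =>
    rw [halfChoose_catalan]
    push_cast
    rw [div_eq_mul_inv, norm_mul, norm_inv, norm_pow, norm_four_padic p hodd]
    simp only [one_pow, inv_one, mul_one]
    rw [norm_mul, norm_mul, norm_pow, norm_neg, norm_one, one_pow, one_mul]
    calc ‖(2 : ℚ_[p])‖ * ‖((catalan n : ℕ) : ℚ_[p])‖
        ≤ 1 * 1 := by
          apply mul_le_mul _ _ (norm_nonneg _) zero_le_one
          · exact_mod_cast Padic.norm_int_le_one 2
          · exact_mod_cast Padic.norm_int_le_one (catalan n)
      _ = 1 := by norm_num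

end padic

theorem padic_sqrt_series (p : ℕ) [Fact p.Prime] (hodd : Odd p) (r : ℤ)
    (hdvd : (p : ℤ) ∣ r + 1) :
    Filter.Tendsto
      (fun N : ℕ => ∑ n ∈ Finset.range N,
        ((halfChoose n * ((r : ℚ) ^ 2 - 1) ^ n : ℚ) : ℚ_[p]))
      Filter.atTop (nhds (-(r : ℚ_[p]))) := by
  set X : ℚ_[p] := ((r^2 - 1 : ℤ) : ℚ_[p]) with hX
  have hXlt : ‖X‖ < 1 := by
    rw [hX, Padic.norm_intCast_lt_one_iff]
    exact hdvd.trans ⟨r - 1, by ring⟩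
  set f : ℕ → ℚ_[p] := fun n => ((halfChoose n : ℚ) : ℚ_[p]) * X ^ n with hf
  have hfe : ∀ n : ℕ, ((halfChoose n * ((r : ℚ) ^ 2 - 1) ^ n : ℚ) : ℚ_[p]) = f n := by
    intro n
    rw [hf, hX]
    push_cast
    ring
  have hnorm : ∀ n, ‖f n‖ ≤ ‖X‖ ^ n := by
    intro n
    rw [hf]
    simp only []
    rw [norm_mul, norm_pow]
    calc ‖((halfChoose n : ℚ) : ℚ_[p])‖ * ‖X‖ ^ n ≤ 1 * ‖X‖ ^ n := by
          apply mul_le_mul_of_nonneg_right (norm_halfChoose_le p hodd n) (by positivity)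
      _ = ‖X‖ ^ n := one_mul _
  have hsumnorm : Summable (fun n => ‖f n‖) :=
    Summable.of_nonneg_of_le (fun n => norm_nonneg _) hnorm
      (summable_geometric_of_lt_one (norm_nonneg X) hXlt)
  have hsum : Summable f := hsumnorm.of_norm
  set L : ℚ_[p] := ∑' n, f n with hL
  have hten : Filter.Tendsto (fun N : ℕ => ∑ n ∈ Finset.range N, f n)
      Filter.atTop (nhds L) := hsum.hasSum.tendsto_sum_nat
  have hf0 : f 0 = 1 := by
    rw [hf]; simp [halfChoose]
  -- L * L = r ^ 2
  have hsq : L * L = ((r : ℚ_[p])) ^ 2 := by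
    rw [hL, tsum_mul_tsum_eq_tsum_sum_antidiagonal_of_summable_norm hsumnorm hsumnorm]
    have hterm : ∀ n, (∑ kl ∈ Finset.HasAntidiagonal.antidiagonal n, f kl.1 * f kl.2)
        = ((Nat.choose 1 n : ℚ) : ℚ_[p]) * X ^ n := by
      intro n
      have h1 : ∀ kl ∈ Finset.HasAntidiagonal.antidiagonal n, f kl.1 * f kl.2
          = ((halfChoose kl.1 * halfChoose kl.2 : ℚ) : ℚ_[p]) * X ^ n := by
        intro kl hkl
        have hkl' : kl.1 + kl.2 = n := Finset.HasAntidiagonal.mem_antidiagonal.mp hkl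
        rw [hf]
        push_cast
        rw [← hkl']
        ring
      rw [Finset.sum_congr rfl h1, ← Finset.sum_mul, ← Rat.cast_sum,
        halfChoose_vandermonde n]
    have hvanish : ∀ n ∉ Finset.range 2, ((Nat.choose 1 n : ℚ) : ℚ_[p]) * X ^ n = 0 := by
      intro n hn
      have h2 : 1 < n := by
        rw [Finset.mem_range, not_lt] at hn
        omega
      rw [Nat.choose_eq_zero_of_lt h2]
      simp
    rw [tsum_congr hterm, tsum_eq_sum hvanish]
    rw [Finset.sum_range_succ, Finset.sum_range_one]
    rw [hX]
    push_cast [Nat.choose]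
    ring
  -- exclude the root r
  have hlt : ‖L - 1‖ < 1 := by
    have hbound : ∀ N : ℕ, ‖(∑ n ∈ Finset.range (N + 1), f n) - 1‖ ≤ ‖X‖ := by
      intro N
      have hrw : ∑ n ∈ Finset.range (N + 1), f n
          = f 0 + ∑ n ∈ Finset.Ico 1 (N + 1), f n := by
        rw [Finset.range_eq_Ico, Finset.sum_eq_sum_Ico_succ_bot (Nat.succ_pos N)]
      rw [hrw, hf0, add_sub_cancel_left]
      apply IsUltrametricDist.norm_sum_le_of_forall_le_of_nonneg (norm_nonneg X)
      intro i hi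
      have hi1 : 1 ≤ i := (Finset.mem_Ico.mp hi).1
      calc ‖f i‖ ≤ ‖X‖ ^ i := hnorm i
        _ ≤ ‖X‖ ^ 1 := pow_le_pow_of_le_one (norm_nonneg X) hXlt.le hi1
        _ = ‖X‖ := pow_one _
    have htendsto : Filter.Tendsto
        (fun N : ℕ => ‖(∑ n ∈ Finset.range (N + 1), f n) - 1‖)
        Filter.atTop (nhds ‖L - 1‖) :=
      ((hten.comp (Filter.tendsto_add_atTop_nat 1)).sub tendsto_const_nhds).norm
    exact lt_of_le_of_lt (le_of_tendsto' htendsto hbound) hXlt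
  have hfac : (L - (r : ℚ_[p])) * (L + (r : ℚ_[p])) = 0 := by linear_combination hsq
  have hLeq : L = -(r : ℚ_[p]) := by
    rcases mul_eq_zero.mp hfac with h | h
    · exfalso
      have hLr : L = (r : ℚ_[p]) := sub_eq_zero.mp h
      rw [hLr] at hlt
      have hcast : ((r - 1 : ℤ) : ℚ_[p]) = (r : ℚ_[p]) - 1 := by push_cast; ring
      rw [← hcast, Padic.norm_intCast_lt_one_iff] at hlt
      have h2 : (p : ℤ) ∣ 2 := by
        have h3 := dvd_sub hdvd hlt
        have h4 : (r + 1) - (r - 1) = (2 : ℤ) := by ring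
        rwa [h4] at h3
      exact not_dvd_two p hodd h2
    · exact eq_neg_of_add_eq_zero_left h
  have hfun : (fun N : ℕ => ∑ n ∈ Finset.range N,
        ((halfChoose n * ((r : ℚ) ^ 2 - 1) ^ n : ℚ) : ℚ_[p]))
      = fun N : ℕ => ∑ n ∈ Finset.range N, f n :=
    funext fun N => Finset.sum_congr rfl fun n _ => hfe n
  rw [hfun, ← hLeq]
  exact hten
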